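/- Let G be a finite group acting on a finite set X and let Δ_G ⊂ (X₁ ⊔ X₂)ⁿ be the big G-diagonal. For finite G-sets X₁, X₂: ((X₁ ⊔ X₂)ⁿ \ Δ_G) with the G_n-action is G_n-equivariantly isomorphic to the disjoint union over k = 0,...,n of ind_{G_k × G_{n-k}}^{G_n}((X₁^k \ Δ_G) × (X₂^{n-k} \ Δ_G)). -/

import Mathlib

/-- Componentwise action of `G × G'` on `X × X'`. -/
instance prodPairAction (G G' X X' : Type*) [Group G] [Group G']
    [MulAction G X] [MulAction G' X'] : MulAction (G × G') (X × X') where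
  smul p q := (p.1 • q.1, p.2 • q.2)
  one_smul q := Prod.ext (one_smul G q.1) (one_smul G' q.2)
  mul_smul a b q := Prod.ext (mul_smul a.1 b.1 q.1) (mul_smul a.2 b.2 q.2)
section Ind
variable {K H : Type*} [Group K] [Group H]

/-- The equivalence relation on `H × X` defining the induced `H`-set of a `K`-set `X`
along a homomorphism `f : K →* H`:
`(h₁,x₁) ∼ (h₂,x₂)` iff `∃ g, h₂ = h₁ (f g)⁻¹` and `x₂ = g • x₁`. -/
def indSetoid (f : K →* H) (X : Type*) [MulAction K X] : Setoid (H × X) where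
  r p q := ∃ g : K, q.1 = p.1 * (f g)⁻¹ ∧ q.2 = g • p.2
  iseqv := by
    constructor
    · exact fun p => ⟨1, by simp⟩
    · rintro p q ⟨g, h1, h2⟩
      exact ⟨g⁻¹, by simp [h1, mul_assoc], by simp [h2]⟩
    · rintro p q r ⟨g, h1, h2⟩ ⟨g', h1', h2'⟩
      exact ⟨g' * g, by simp [h1, h1', mul_assoc], by simp [h2, h2', mul_smul]⟩

/-- The induced `H`-set `ind_K^H X = (H × X)/∼`. -/
def Ind (f : K →* H) (X : Type*) [MulAction K X] : Type _ := Quotient (indSetoid f X)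

/-- `H` acts on the induced set by left multiplication on the first coordinate. -/
instance Ind.mulAction (f : K →* H) (X : Type*) [MulAction K X] :
    MulAction H (Ind f X) where
  smul h := Quotient.map (fun p => (h * p.1, p.2))
    (by rintro p q ⟨g, h1, h2⟩; exact ⟨g, by simp [h1, mul_assoc], h2⟩)
  one_smul x := by
    refine Quotient.inductionOn x (fun p => ?_)
    show Quotient.map _ _ _ = _
    simp
  mul_smul a b x := by
    refine Quotient.inductionOn x (fun p => ?_)
    show Quotient.map _ _ _ = Quotient.map _ _ (Quotient.map _ _ _)
    simp [mul_assoc]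

end Ind
section Wreath

variable (G : Type*) [Group G] (ι : Type*)

/-- Permutations of `ι` act on `ι → G` by automorphisms (permuting the factors). -/
def permAut : Equiv.Perm ι →* MulAut (ι → G) where
  toFun σ :=
    { toEquiv := Equiv.arrowCongr σ (Equiv.refl G)
      map_mul' := fun v w => rfl }
  map_one' := by ext v i; rfl
  map_mul' σ τ := by ext v i; rfl

/-- The wreath product `G_ι = G^ι ⋊ Perm ι`. -/
def Wr : Type _ := (ι → G) ⋊[permAut G ι] Equiv.Perm ι

instance : Group (Wr G ι) := inferInstanceAs (Group ((ι → G) ⋊[permAut G ι] Equiv.Perm ι))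

variable {G ι}

/-- The `G^ι`-component of an element of the wreath product. -/
def Wr.l (w : Wr G ι) : ι → G := SemidirectProduct.left w

/-- The `Perm ι`-component of an element of the wreath product. -/
def Wr.p (w : Wr G ι) : Equiv.Perm ι := SemidirectProduct.right w

/-- Building an element of the wreath product from its two components. -/
def Wr.mk (v : ι → G) (σ : Equiv.Perm ι) : Wr G ι := ⟨v, σ⟩

@[simp] lemma Wr.l_mk (v : ι → G) (σ : Equiv.Perm ι) : (Wr.mk v σ).l = v := rfl
@[simp] lemma Wr.p_mk (v : ι → G) (σ : Equiv.Perm ι) : (Wr.mk v σ).p = σ := rfl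
@[simp] lemma Wr.l_one : (1 : Wr G ι).l = 1 := rfl
@[simp] lemma Wr.p_one : (1 : Wr G ι).p = 1 := rfl
@[simp] lemma Wr.l_mul (a b : Wr G ι) : (a * b).l = a.l * fun i => b.l (a.p.symm i) := rfl
@[simp] lemma Wr.p_mul (a b : Wr G ι) : (a * b).p = a.p * b.p := rfl

variable (G ι)

/-- The natural action of the wreath product `G_ι` on `X^ι`:
`S_ι` permutes the factors and `G^ι` acts componentwise. -/
instance wrAction (X : Type*) [MulAction G X] : MulAction (Wr G ι) (ι → X) where
  smul w y := fun i => w.l i • y (w.p.symm i)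
  one_smul y := funext fun i => by
    show (1 : Wr G ι).l i • y ((1 : Wr G ι).p.symm i) = y i
    simp <;> rfl
  mul_smul a b y := funext fun i => by
    show (a * b).l i • y ((a * b).p.symm i) =
      a.l i • b.l (a.p.symm i) • y (b.p.symm (a.p.symm i))
    rw [Wr.l_mul, Wr.p_mul, Pi.mul_apply, mul_smul]
    rfl

@[simp] lemma wr_smul_apply {X : Type*} [MulAction G X] (w : Wr G ι) (y : ι → X) (i : ι) :
    (w • y) i = w.l i • y (w.p.symm i) := rfl

end Wreath
section WreathHoms

@[simp] lemma Wr.mk_mul {G : Type*} [Group G] {ι : Type*} (v w : ι → G)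
    (σ τ : Equiv.Perm ι) :
    Wr.mk v σ * Wr.mk w τ = Wr.mk (fun i => v i * w (σ.symm i)) (σ * τ) := rfl

@[simp] lemma Wr.left_mk {G : Type*} [Group G] {ι : Type*} (v : ι → G) (σ : Equiv.Perm ι) :
    SemidirectProduct.left (Wr.mk v σ) = v := rfl

@[simp] lemma Wr.right_mk {G : Type*} [Group G] {ι : Type*} (v : ι → G) (σ : Equiv.Perm ι) :
    SemidirectProduct.right (Wr.mk v σ) = σ := rfl

variable (G : Type*) [Group G]

/-- The natural embedding `G_ι × G_κ → G_{ι ⊕ κ}` of wreath products. -/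
def wrJoin (ι κ : Type*) : Wr G ι × Wr G κ →* Wr G (ι ⊕ κ) where
  toFun p := Wr.mk (Sum.elim p.1.l p.2.l) (Equiv.Perm.sumCongrHom ι κ (p.1.p, p.2.p))
  map_one' := by
    apply SemidirectProduct.ext
    · funext i; cases i <;> rfl
    · show Equiv.Perm.sumCongrHom ι κ (1, 1) = 1
      exact map_one _
  map_mul' p q := by
    show Wr.mk _ _ = Wr.mk _ _ * Wr.mk _ _
    rw [Wr.mk_mul]
    apply SemidirectProduct.ext
    · funext i
      cases i with
      | inl a =>
          show (p.1.l * fun i => q.1.l (p.1.p.symm i)) a = _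
          simp [Equiv.Perm.sumCongrHom]
      | inr b =>
          show (p.2.l * fun i => q.2.l (p.2.p.symm i)) b = _
          simp [Equiv.Perm.sumCongrHom]
    · exact map_mul (Equiv.Perm.sumCongrHom ι κ) (p.1.p, p.2.p) (q.1.p, q.2.p)

/-- Transport of wreath products along a bijection of index sets. -/
def wrCongrHom {ι κ : Type*} (e : ι ≃ κ) : Wr G ι →* Wr G κ where
  toFun w := Wr.mk (w.l ∘ e.symm) (e.permCongr w.p)
  map_one' := by
    apply SemidirectProduct.ext
    · rfl
    · show e.permCongr 1 = 1
      ext x; simp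
  map_mul' a b := by
    show Wr.mk _ _ = Wr.mk _ _ * Wr.mk _ _
    rw [Wr.mk_mul]
    apply SemidirectProduct.ext
    · funext i
      show (a.l * fun i => b.l (a.p.symm i)) (e.symm i) = _
      simp [Equiv.permCongr, Equiv.equivCongr]
    · ext x
      simp [Equiv.permCongr, Equiv.equivCongr, Equiv.Perm.mul_apply]

/-- The homomorphism of wreath products `K_ι → H_ι` induced by `f : K →* H`. -/
def wrMapHom {K H : Type*} [Group K] [Group H] (f : K →* H) (ι : Type*) :
    Wr K ι →* Wr H ι where
  toFun w := Wr.mk (f ∘ w.l) w.p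
  map_one' := by
    apply SemidirectProduct.ext
    · funext i; exact map_one f
    · rfl
  map_mul' a b := by
    show Wr.mk _ _ = Wr.mk _ _ * Wr.mk _ _
    rw [Wr.mk_mul]
    apply SemidirectProduct.ext
    · funext i
      show f ((a.l * fun i => b.l (a.p.symm i)) i) = _
      simp
    · rfl

variable (ι : Type*)

/-- The big `G`-diagonal in `X^ι`: tuples with two coordinates in the same `G`-orbit. -/
def bigDiag (X : Type*) [MulAction G X] : Set (ι → X) :=
  {y | ∃ i j, i ≠ j ∧ y i ∈ MulAction.orbit G (y j)}

/-- The wreath product `G_ι` acts on the complement of the big diagonal in `X^ι`. -/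
instance wrDiagAction (X : Type*) [MulAction G X] :
    MulAction (Wr G ι) {y : ι → X // y ∉ bigDiag G ι X} where
  smul w y := ⟨w • (y : ι → X), by
    rintro ⟨i, j, hij, g, hg⟩
    apply y.2
    refine ⟨w.p.symm i, w.p.symm j, fun h => hij (by simpa using congrArg w.p h), ?_⟩
    refine ⟨(w.l i)⁻¹ * g * w.l j, ?_⟩
    have hg' : g • (w.l j • (y : ι → X) (w.p.symm j)) = w.l i • (y : ι → X) (w.p.symm i) := hg
    calc ((w.l i)⁻¹ * g * w.l j) • (y : ι → X) (w.p.symm j)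
        = (w.l i)⁻¹ • g • w.l j • (y : ι → X) (w.p.symm j) := by
          rw [mul_smul, mul_smul]
      _ = (y : ι → X) (w.p.symm i) := by rw [hg', inv_smul_smul]⟩
  one_smul y := Subtype.ext (one_smul _ (y : ι → X))
  mul_smul a b y := Subtype.ext (mul_smul a b (y : ι → X))

end WreathHoms
/-- The natural embedding `G_k × G_{n-k} → G_n` of wreath products (via the identification
`Fin k ⊕ Fin (n-k) ≃ Fin n`). -/
def wrEmbed (G : Type*) [Group G] (n k : ℕ) (hk : k ≤ n) :
    Wr G (Fin k) × Wr G (Fin (n - k)) →* Wr G (Fin n) :=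
  (wrCongrHom G (finSumFinEquiv.trans (finCongr (by omega)))).comp
    (wrJoin G (Fin k) (Fin (n - k)))
section Decomp

variable {G : Type} [Group G] {X₁ X₂ : Type} [MulAction G X₁] [MulAction G X₂]

lemma smul_isLeft' (g : G) (s : X₁ ⊕ X₂) : (g • s).isLeft = s.isLeft := by
  cases s
  · rw [Sum.smul_inl]; rfl
  · rw [Sum.smul_inr]; rfl

lemma orbit_isLeft' {s t : X₁ ⊕ X₂} (h : s ∈ MulAction.orbit G t) : s.isLeft = t.isLeft := by
  obtain ⟨g, rfl⟩ := h
  exact smul_isLeft' g t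

lemma inl_orbit {a b : X₁} (h : (Sum.inl a : X₁ ⊕ X₂) ∈ MulAction.orbit G (Sum.inl b)) :
    a ∈ MulAction.orbit G b := by
  obtain ⟨g, hg⟩ := h
  have hg' : Sum.inl (g • b) = Sum.inl a := hg
  exact ⟨g, Sum.inl.inj hg'⟩

lemma inr_orbit {a b : X₂} (h : (Sum.inr a : X₁ ⊕ X₂) ∈ MulAction.orbit G (Sum.inr b)) :
    a ∈ MulAction.orbit G b := by
  obtain ⟨g, hg⟩ := h
  have hg' : Sum.inr (g • b) = Sum.inr a := hg
  exact ⟨g, Sum.inr.inj hg'⟩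

lemma orbit_inl {a b : X₁} (h : a ∈ MulAction.orbit G b) :
    (Sum.inl a : X₁ ⊕ X₂) ∈ MulAction.orbit G (Sum.inl b) := by
  obtain ⟨g, rfl⟩ := h
  exact ⟨g, rfl⟩

lemma orbit_inr {a b : X₂} (h : a ∈ MulAction.orbit G b) :
    (Sum.inr a : X₁ ⊕ X₂) ∈ MulAction.orbit G (Sum.inr b) := by
  obtain ⟨g, rfl⟩ := h
  exact ⟨g, rfl⟩

/-- The identification `Fin k ⊕ Fin (n-k) ≃ Fin n`. -/
def eCut (n k : ℕ) (hk : k ≤ n) : Fin k ⊕ Fin (n - k) ≃ Fin n :=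
  finSumFinEquiv.trans (finCongr (by omega))

/-- Joining a pair of tuples into one tuple of length `n`. -/
def joinFun {X₁ X₂ : Type} (n k : ℕ) (hk : k ≤ n)
    (x : (Fin k → X₁) × (Fin (n - k) → X₂)) : Fin n → X₁ ⊕ X₂ :=
  fun i => Sum.elim (fun a => Sum.inl (x.1 a)) (fun b => Sum.inr (x.2 b)) ((eCut n k hk).symm i)

lemma wrEmbed_l (n k : ℕ) (hk : k ≤ n) (p : Wr G (Fin k) × Wr G (Fin (n - k))) :
    (wrEmbed G n k hk p).l = fun i => Sum.elim p.1.l p.2.l ((eCut n k hk).symm i) := rfl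

lemma wrEmbed_p (n k : ℕ) (hk : k ≤ n) (p : Wr G (Fin k) × Wr G (Fin (n - k))) :
    (wrEmbed G n k hk p).p = (eCut n k hk).permCongr (p.1.p.sumCongr p.2.p) := rfl

lemma permCongr_symm_apply' {α β : Type*} (e : α ≃ β) (q : Equiv.Perm α) (x : β) :
    ((e.permCongr q).symm) x = e (q.symm (e.symm x)) := rfl

lemma joinFun_isLeft (n k : ℕ) (hk : k ≤ n) (x : (Fin k → X₁) × (Fin (n - k) → X₂))
    (i : Fin n) : (joinFun n k hk x i).isLeft = ((eCut n k hk).symm i).isLeft := by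
  unfold joinFun
  cases (eCut n k hk).symm i <;> rfl

lemma join_smul (n k : ℕ) (hk : k ≤ n) (p : Wr G (Fin k) × Wr G (Fin (n - k)))
    (x : (Fin k → X₁) × (Fin (n - k) → X₂)) :
    wrEmbed G n k hk p • joinFun n k hk x = joinFun n k hk (p.1 • x.1, p.2 • x.2) := by
  have hsymm : ∀ i, (wrEmbed G n k hk p).p.symm i
      = (eCut n k hk) ((p.1.p.symm.sumCongr p.2.p.symm) ((eCut n k hk).symm i)) := by
    intro i
    rw [wrEmbed_p, permCongr_symm_apply', Equiv.sumCongr_symm]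
  funext i
  show (wrEmbed G n k hk p).l i • joinFun n k hk x ((wrEmbed G n k hk p).p.symm i) = _
  rw [hsymm, wrEmbed_l]
  rcases h : (eCut n k hk).symm i with a | b <;>
    simp [joinFun, h, Sum.smul_inl, Sum.smul_inr]

lemma joinFun_notMem (n k : ℕ) (hk : k ≤ n)
    (x₁ : {y : Fin k → X₁ // y ∉ bigDiag G (Fin k) X₁})
    (x₂ : {y : Fin (n - k) → X₂ // y ∉ bigDiag G (Fin (n - k)) X₂}) :
    joinFun n k hk (x₁.val, x₂.val) ∉ bigDiag G (Fin n) (X₁ ⊕ X₂) := by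
  rintro ⟨i, j, hij, horb⟩
  have hne : (eCut n k hk).symm i ≠ (eCut n k hk).symm j :=
    fun h => hij (by simpa using congrArg (eCut n k hk) h)
  rcases hi : (eCut n k hk).symm i with a | b <;> rcases hj : (eCut n k hk).symm j with a' | b' <;>
    simp only [joinFun, hi, hj, Sum.elim_inl, Sum.elim_inr] at horb
  · exact x₁.2 ⟨a, a', fun h => hne (by rw [hi, hj, h]), inl_orbit horb⟩
  · exact absurd (orbit_isLeft' horb) (by simp)
  · exact absurd (orbit_isLeft' horb) (by simp)
  · exact x₂.2 ⟨b, b', fun h => hne (by rw [hi, hj, h]), inr_orbit horb⟩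

end Decomp

section Decomp2

variable {G : Type} [Group G] {X₁ X₂ : Type} [MulAction G X₁] [MulAction G X₂]

/-- `joinFun` as a map of off-diagonal subtypes. -/
def Jmap (n k : ℕ) (hk : k ≤ n)
    (x : {y : Fin k → X₁ // y ∉ bigDiag G (Fin k) X₁} ×
         {y : Fin (n - k) → X₂ // y ∉ bigDiag G (Fin (n - k)) X₂}) :
    {y : Fin n → X₁ ⊕ X₂ // y ∉ bigDiag G (Fin n) (X₁ ⊕ X₂)} :=
  ⟨joinFun n k hk (x.1.val, x.2.val), joinFun_notMem n k hk x.1 x.2⟩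

lemma Jmap_smul (n k : ℕ) (hk : k ≤ n) (p : Wr G (Fin k) × Wr G (Fin (n - k)))
    (x : {y : Fin k → X₁ // y ∉ bigDiag G (Fin k) X₁} ×
         {y : Fin (n - k) → X₂ // y ∉ bigDiag G (Fin (n - k)) X₂}) :
    Jmap n k hk (p • x) = wrEmbed G n k hk p • Jmap n k hk x := by
  apply Subtype.ext
  exact (join_smul n k hk p (x.1.val, x.2.val)).symm

lemma joinFun_inj (n k : ℕ) (hk : k ≤ n) {x x' : (Fin k → X₁) × (Fin (n - k) → X₂)}
    (h : joinFun n k hk x = joinFun n k hk x') : x = x' := by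
  have h1 : x.1 = x'.1 := funext fun a => by
    have h' := congrFun h ((eCut n k hk) (Sum.inl a))
    have h'' : (Sum.inl (x.1 a) : X₁ ⊕ X₂) = Sum.inl (x'.1 a) := by
      simpa [joinFun] using h'
    exact Sum.inl.inj h''
  have h2 : x.2 = x'.2 := funext fun b => by
    have h' := congrFun h ((eCut n k hk) (Sum.inr b))
    have h'' : (Sum.inr (x.2 b) : X₁ ⊕ X₂) = Sum.inr (x'.2 b) := by
      simpa [joinFun] using h'
    exact Sum.inr.inj h''
  exact Prod.ext h1 h2

/-- Per-component map from the induced piece to the off-diagonal set. -/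
def Fk (n : ℕ) (k : Fin (n + 1)) :
    Ind (wrEmbed G n k (Fin.is_le k))
      ({y : Fin (k : ℕ) → X₁ // y ∉ bigDiag G (Fin (k : ℕ)) X₁} ×
        {y : Fin (n - (k : ℕ)) → X₂ // y ∉ bigDiag G (Fin (n - (k : ℕ))) X₂}) →
    {y : Fin n → X₁ ⊕ X₂ // y ∉ bigDiag G (Fin n) (X₁ ⊕ X₂)} :=
  Quotient.lift
    (fun p => p.1 • Jmap n (k : ℕ) (Fin.is_le k) p.2)
    (by
      rintro ⟨h, x⟩ ⟨h', x'⟩ ⟨g, hg1, hg2⟩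
      dsimp only at hg1 hg2 ⊢
      subst hg1; subst hg2
      rw [Jmap_smul, smul_smul, inv_mul_cancel_right])

lemma Fk_mk (n : ℕ) (k : Fin (n + 1)) (p) : Fk (G := G) (X₁ := X₁) (X₂ := X₂) n k ⟦p⟧ =
    p.1 • Jmap n (k : ℕ) (Fin.is_le k) p.2 := rfl

lemma ind_smul_mk {K H : Type*} [Group K] [Group H] (f : K →* H) (X : Type*) [MulAction K X]
    (w h : H) (x : X) :
    w • (show Ind f X from ⟦(h, x)⟧) = (show Ind f X from ⟦(w * h, x)⟧) := rfl

/-- The full map from the sigma type of induced pieces. -/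
def FF (G : Type) [Group G] (X₁ X₂ : Type) [MulAction G X₁] [MulAction G X₂] (n : ℕ) :
    (Σ k : Fin (n + 1),
      Ind (wrEmbed G n k (Fin.is_le k))
        ({y : Fin (k : ℕ) → X₁ // y ∉ bigDiag G (Fin (k : ℕ)) X₁} ×
          {y : Fin (n - (k : ℕ)) → X₂ // y ∉ bigDiag G (Fin (n - (k : ℕ))) X₂})) →
    {y : Fin n → X₁ ⊕ X₂ // y ∉ bigDiag G (Fin n) (X₁ ⊕ X₂)} :=
  fun q => Fk n q.1 q.2

set_option synthInstance.maxHeartbeats 1000000 in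
lemma FF_smul (n : ℕ) (w : Wr G (Fin n)) (q) :
    FF G X₁ X₂ n (w • q) = w • FF G X₁ X₂ n q := by
  obtain ⟨k, q⟩ := q
  rw [Sigma.smul_mk]
  show Fk n k (w • q) = w • Fk n k q
  obtain ⟨⟨h, x⟩, rfl⟩ := q.exists_rep
  show (w * h) • Jmap n (k : ℕ) (Fin.is_le k) x = w • (h • Jmap n (k : ℕ) (Fin.is_le k) x)
  rw [mul_smul]

end Decomp2

section Decomp3

variable {G : Type} [Group G] {X₁ X₂ : Type} [MulAction G X₁] [MulAction G X₂]

def leftSubtypeEquiv {α β : Type*} : {s : α ⊕ β // s.isLeft = true} ≃ α where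
  toFun s := s.1.getLeft s.2
  invFun a := ⟨Sum.inl a, rfl⟩
  left_inv s := Subtype.ext (Sum.inl_getLeft s.1 s.2)
  right_inv a := rfl

lemma card_isLeft_joinFun {X₁ X₂ : Type} (n k : ℕ) (hk : k ≤ n)
    (x : (Fin k → X₁) × (Fin (n - k) → X₂)) :
    Fintype.card {i : Fin n // (joinFun n k hk x i).isLeft = true} = k := by
  have e1 : {i : Fin n // (joinFun n k hk x i).isLeft = true}
      ≃ {s : Fin k ⊕ Fin (n - k) // s.isLeft = true} :=
    Equiv.subtypeEquiv (eCut n k hk).symm (fun i => by rw [joinFun_isLeft])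
  rw [Fintype.card_congr (e1.trans leftSubtypeEquiv), Fintype.card_fin]

lemma card_isLeft_smul (n : ℕ) (w : Wr G (Fin n)) (y : Fin n → X₁ ⊕ X₂) :
    Fintype.card {i : Fin n // ((w • y) i).isLeft = true}
      = Fintype.card {i : Fin n // (y i).isLeft = true} :=
  Fintype.card_congr (Equiv.subtypeEquiv w.p.symm (fun i => by
    show ((w • y) i).isLeft = true ↔ (y (w.p.symm i)).isLeft = true
    rw [wr_smul_apply, smul_isLeft']))

lemma exists_embed_eq (n k : ℕ) (hk : k ≤ n) (u : Wr G (Fin n))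
    (x x' : (Fin k → X₁) × (Fin (n - k) → X₂))
    (hu : joinFun n k hk x' = u • joinFun n k hk x) :
    ∃ p : Wr G (Fin k) × Wr G (Fin (n - k)), wrEmbed G n k hk p = u := by
  classical
  set e := eCut n k hk with he
  have hP : ∀ i, ((e.symm (u.p.symm i)).isLeft) = ((e.symm i).isLeft) := by
    intro i
    have h1 := congrArg Sum.isLeft (congrFun hu i)
    rw [joinFun_isLeft] at h1
    have h2 : ((u • joinFun n k hk x) i).isLeft = (joinFun n k hk x (u.p.symm i)).isLeft := by
      rw [wr_smul_apply, smul_isLeft']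
    rw [h2, joinFun_isLeft] at h1
    exact h1.symm
  have hP' : ∀ i, ((e.symm (u.p i)).isLeft) = ((e.symm i).isLeft) := by
    intro i
    have h5 := hP (u.p i)
    rw [Equiv.symm_apply_apply] at h5
    exact h5.symm
  have hL : ∀ a : Fin k, (e.symm (u.p (e (Sum.inl a)))).isLeft = true := by
    intro a; rw [hP', Equiv.symm_apply_apply]; rfl
  have hR : ∀ b : Fin (n - k), (e.symm (u.p (e (Sum.inr b)))).isRight = true := by
    intro b
    have hb : (e.symm (u.p (e (Sum.inr b)))).isLeft = false := by
      rw [hP', Equiv.symm_apply_apply]; rfl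
    exact Sum.not_isLeft.mp (by rw [hb]; simp)
  set t₁ : Fin k → Fin k := fun a => (e.symm (u.p (e (Sum.inl a)))).getLeft (hL a) with ht₁
  set t₂ : Fin (n - k) → Fin (n - k) :=
    fun b => (e.symm (u.p (e (Sum.inr b)))).getRight (hR b) with ht₂
  have ht₁' : ∀ a, Sum.inl (t₁ a) = e.symm (u.p (e (Sum.inl a))) :=
    fun a => Sum.inl_getLeft _ _
  have ht₂' : ∀ b, Sum.inr (t₂ b) = e.symm (u.p (e (Sum.inr b))) :=
    fun b => Sum.inr_getRight _ _
  have inj₁ : Function.Injective t₁ := by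
    intro a a' hEq
    have h3 : e.symm (u.p (e (Sum.inl a))) = e.symm (u.p (e (Sum.inl a'))) := by
      rw [← ht₁', ← ht₁', hEq]
    exact Sum.inl.inj (e.injective (u.p.injective (e.symm.injective h3)))
  have inj₂ : Function.Injective t₂ := by
    intro b b' hEq
    have h3 : e.symm (u.p (e (Sum.inr b))) = e.symm (u.p (e (Sum.inr b'))) := by
      rw [← ht₂', ← ht₂', hEq]
    exact Sum.inr.inj (e.injective (u.p.injective (e.symm.injective h3)))
  let τ₁ : Equiv.Perm (Fin k) := Equiv.ofBijective t₁ (Finite.injective_iff_bijective.mp inj₁)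
  let τ₂ : Equiv.Perm (Fin (n - k)) :=
    Equiv.ofBijective t₂ (Finite.injective_iff_bijective.mp inj₂)
  refine ⟨(Wr.mk (fun a => u.l (e (Sum.inl a))) τ₁, Wr.mk (fun b => u.l (e (Sum.inr b))) τ₂), ?_⟩
  apply SemidirectProduct.ext
  · show (wrEmbed G n k hk _).l = u.l
    rw [wrEmbed_l]
    funext i
    rcases hi : e.symm i with a | b
    · show u.l (e (Sum.inl a)) = u.l i
      rw [← hi, Equiv.apply_symm_apply]
    · show u.l (e (Sum.inr b)) = u.l i
      rw [← hi, Equiv.apply_symm_apply]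
  · show (wrEmbed G n k hk _).p = u.p
    rw [wrEmbed_p]
    apply Equiv.ext
    intro i
    rw [Equiv.permCongr_apply, Wr.p_mk, Wr.p_mk]
    rcases hi : e.symm i with a | b
    · have h4 : (τ₁.sumCongr τ₂) (Sum.inl a) = Sum.inl (t₁ a) := rfl
      rw [← he, h4, ht₁', Equiv.apply_symm_apply, ← hi, Equiv.apply_symm_apply]
    · have h4 : (τ₁.sumCongr τ₂) (Sum.inr b) = Sum.inr (t₂ b) := rfl
      rw [← he, h4, ht₂', Equiv.apply_symm_apply, ← hi, Equiv.apply_symm_apply]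

lemma FF_inj (n : ℕ) : Function.Injective (FF G X₁ X₂ n) := by
  rintro ⟨k, q⟩ ⟨k', q'⟩ hFF
  obtain ⟨⟨h, x⟩, rfl⟩ := q.exists_rep
  obtain ⟨⟨h', x'⟩, rfl⟩ := q'.exists_rep
  have hval : h • joinFun n (k : ℕ) (Fin.is_le k) (x.1.val, x.2.val)
      = h' • joinFun n (k' : ℕ) (Fin.is_le k') (x'.1.val, x'.2.val) :=
    congrArg Subtype.val hFF
  have hcard : (k : ℕ) = (k' : ℕ) := by
    have c1 := card_isLeft_joinFun (X₂ := X₂) n (k : ℕ) (Fin.is_le k) (x.1.val, x.2.val)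
    have c2 := card_isLeft_joinFun (X₂ := X₂) n (k' : ℕ) (Fin.is_le k') (x'.1.val, x'.2.val)
    rw [← c1, ← c2, ← card_isLeft_smul n h (joinFun n (k : ℕ) (Fin.is_le k) (x.1.val, x.2.val)),
      ← card_isLeft_smul n h' (joinFun n (k' : ℕ) (Fin.is_le k') (x'.1.val, x'.2.val)), hval]
  have hkk : k = k' := Fin.ext hcard
  subst hkk
  have hu : joinFun n (k : ℕ) (Fin.is_le k) (x'.1.val, x'.2.val)
      = (h'⁻¹ * h) • joinFun n (k : ℕ) (Fin.is_le k) (x.1.val, x.2.val) := by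
    rw [mul_smul, hval, inv_smul_smul]
  obtain ⟨p, hp⟩ := exists_embed_eq n (k : ℕ) (Fin.is_le k) (h'⁻¹ * h) _ _ hu
  have key : (show Ind (wrEmbed G n (k : ℕ) (Fin.is_le k)) _ from ⟦(h, x)⟧)
      = (show Ind (wrEmbed G n (k : ℕ) (Fin.is_le k)) _ from ⟦(h', x')⟧) := by
    apply Quotient.sound
    refine ⟨p, ?_, ?_⟩
    · show h' = h * (wrEmbed G n (k : ℕ) (Fin.is_le k) p)⁻¹
      rw [hp]
      group
    · have hx := joinFun_inj n (k : ℕ) (Fin.is_le k) (hu.trans (by rw [← hp, join_smul]))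
      have e1 : x'.1.val = p.1 • x.1.val := congrArg Prod.fst hx
      have e2 : x'.2.val = p.2 • x.2.val := congrArg Prod.snd hx
      show x' = (p.1 • x.1, p.2 • x.2)
      exact Prod.ext (Subtype.ext e1) (Subtype.ext e2)
  rw [show (⟦(h, x)⟧ : Quotient _) = ⟦(h', x')⟧ from key]

lemma FF_surj (n : ℕ) : Function.Surjective (FF G X₁ X₂ n) := by
  classical
  rintro ⟨y, hy⟩
  set P : Fin n → Prop := fun i => (y i).isLeft = true with hPdef
  have hk : Fintype.card {i // P i} ≤ n := by
    have := Fintype.card_subtype_le P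
    rwa [Fintype.card_fin] at this
  set k₀ := Fintype.card {i // P i} with hk₀
  have e₁ : {i // P i} ≃ Fin k₀ := Fintype.equivFinOfCardEq rfl
  have e₂ : {i // ¬ P i} ≃ Fin (n - k₀) := Fintype.equivFinOfCardEq (by
    rw [Fintype.card_subtype_compl, Fintype.card_fin])
  set σ : Equiv.Perm (Fin n) :=
    (eCut n k₀ hk).symm.trans ((e₁.symm.sumCongr e₂.symm).trans (Equiv.sumCompl P)) with hσ
  set x₁ : Fin k₀ → X₁ := fun a => (y (e₁.symm a).val).getLeft ((e₁.symm a).prop) with hx₁d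
  set x₂ : Fin (n - k₀) → X₂ := fun b => (y (e₂.symm b).val).getRight
    (Sum.not_isLeft.mp (e₂.symm b).prop) with hx₂d
  have hx₁' : ∀ a, Sum.inl (x₁ a) = y (e₁.symm a).val := fun a => Sum.inl_getLeft _ _
  have hx₂' : ∀ b, Sum.inr (x₂ b) = y (e₂.symm b).val := fun b => Sum.inr_getRight _ _
  have hx₁ : x₁ ∉ bigDiag G (Fin k₀) X₁ := by
    rintro ⟨a, a', haa, horb⟩
    refine hy ⟨(e₁.symm a).val, (e₁.symm a').val,
      fun hEq => haa (e₁.symm.injective (Subtype.coe_injective hEq)), ?_⟩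
    rw [← hx₁' a, ← hx₁' a']
    exact orbit_inl horb
  have hx₂ : x₂ ∉ bigDiag G (Fin (n - k₀)) X₂ := by
    rintro ⟨b, b', hbb, horb⟩
    refine hy ⟨(e₂.symm b).val, (e₂.symm b').val,
      fun hEq => hbb (e₂.symm.injective (Subtype.coe_injective hEq)), ?_⟩
    rw [← hx₂' b, ← hx₂' b']
    exact orbit_inr horb
  have hjoin : ∀ s, Sum.elim (fun a => Sum.inl (x₁ a)) (fun b => Sum.inr (x₂ b)) s
      = y (σ ((eCut n k₀ hk) s)) := by
    rintro (a | b)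
    · have hσa : σ ((eCut n k₀ hk) (Sum.inl a)) = (e₁.symm a).val := by
        simp [hσ, Equiv.sumCompl_apply_inl]
      rw [Sum.elim_inl, hσa]
      exact hx₁' a
    · have hσb : σ ((eCut n k₀ hk) (Sum.inr b)) = (e₂.symm b).val := by
        simp [hσ, Equiv.sumCompl_apply_inr]
      rw [Sum.elim_inr, hσb]
      exact hx₂' b
  refine ⟨⟨⟨k₀, by omega⟩,
    (show Ind (wrEmbed G n k₀ hk) _ from ⟦(Wr.mk 1 σ, (⟨x₁, hx₁⟩, ⟨x₂, hx₂⟩))⟧)⟩, ?_⟩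
  apply Subtype.ext
  show (Wr.mk (1 : Fin n → G) σ) • joinFun n k₀ hk (x₁, x₂) = y
  funext i
  show (Wr.mk (1 : Fin n → G) σ).l i
      • joinFun n k₀ hk (x₁, x₂) ((Wr.mk (1 : Fin n → G) σ).p.symm i) = y i
  rw [Wr.l_mk, Wr.p_mk]
  show (1 : G) • joinFun n k₀ hk (x₁, x₂) (σ.symm i) = y i
  rw [one_smul]
  show Sum.elim (fun a => Sum.inl (x₁ a)) (fun b => Sum.inr (x₂ b))
      ((eCut n k₀ hk).symm (σ.symm i)) = y i
  rw [hjoin, Equiv.apply_symm_apply, Equiv.apply_symm_apply]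

end Decomp3

theorem sum_power_minus_diagonal_decomposes_into_induced_pieces
    (G : Type) [Group G] [Finite G]
    (X₁ X₂ : Type) [MulAction G X₁] [MulAction G X₂] [Finite X₁] [Finite X₂] (n : ℕ) :
    ∃ e : {y : Fin n → (X₁ ⊕ X₂) // y ∉ bigDiag G (Fin n) (X₁ ⊕ X₂)} ≃
        Σ k : Fin (n + 1),
          Ind (wrEmbed G n k (Fin.is_le k))
            ({y : Fin (k : ℕ) → X₁ // y ∉ bigDiag G (Fin (k : ℕ)) X₁} ×
              {y : Fin (n - (k : ℕ)) → X₂ // y ∉ bigDiag G (Fin (n - (k : ℕ))) X₂}),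
      ∀ (w : Wr G (Fin n)) y, e (w • y) = w • e y := by
  have hbij : Function.Bijective (FF G X₁ X₂ n) := ⟨FF_inj n, FF_surj n⟩
  refine ⟨(Equiv.ofBijective _ hbij).symm, ?_⟩
  intro w y
  have h1 : ∀ z, Equiv.ofBijective _ hbij z = FF G X₁ X₂ n z := fun z => rfl
  apply (Equiv.ofBijective _ hbij).injective
  rw [Equiv.apply_symm_apply, h1, FF_smul, ← h1, Equiv.apply_symm_apply]
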